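/- arXiv:2307.02158 — 3 statements merged into one kernel-verified Lean document; each statement's English description precedes it below -/
import Mathlib

section
/- Let f: ℝ → ℝ be continuous and odd with f(s)/s strictly increasing for s > 0. Then for any u ∈ H¹(ℝᵈ) \ {0}, the function h(s) = S(su) (where S(v) = ½‖v‖²_{H¹} − ∫ F(v) dx, F(t) = ∫₀^t f) has at most one critical point on (0,∞); equivalently, the Nehari functional I(su) = s²‖u‖²_{H¹} − ∫ f(su)·su dx can vanish at most once for s ∈ (0,∞). -/
open MeasureTheory Real Set Filter

noncomputable section

/-- Euclidean space `ℝᵈ`. -/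
abbrev E (d : ℕ) := EuclideanSpace ℝ (Fin d)

/-- `‖∇u(x)‖²`. -/
noncomputable def gradSq {d : ℕ} (u : E d → ℝ) (x : E d) : ℝ := ‖gradient u x‖ ^ 2

/-- Squared `H¹` norm: `‖∇u‖²_{L²} + ‖u‖²_{L²}`. -/
noncomputable def H1normSq {d : ℕ} (u : E d → ℝ) : ℝ :=
  (∫ x, gradSq u x) + ∫ x, (u x) ^ 2

/-- Primitive `F(t) = ∫₀ᵗ f(s) ds`. -/
noncomputable def Fprim (f : ℝ → ℝ) (t : ℝ) : ℝ := ∫ s in (0:ℝ)..t, f s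

/-- Action `S(u) = ½‖∇u‖²_{L²} + ½‖u‖²_{L²} - ∫ F(u)`. -/
noncomputable def Sfun {d : ℕ} (f : ℝ → ℝ) (u : E d → ℝ) : ℝ :=
  (1 / 2) * H1normSq u - ∫ x, Fprim f (u x)

/-- Nehari functional `I(u) = ‖∇u‖²_{L²} + ‖u‖²_{L²} - ∫ f(u)u`. -/
noncomputable def Ifun {d : ℕ} (f : ℝ → ℝ) (u : E d → ℝ) : ℝ :=
  H1normSq u - ∫ x, f (u x) * u x

/-- Membership in the Nehari manifold `𝒩` (with the integrability conditions
making the functionals meaningful). -/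
def memNehari {d : ℕ} (f : ℝ → ℝ) (u : E d → ℝ) : Prop :=
  ¬ u =ᵐ[volume] (0 : E d → ℝ) ∧ Integrable (gradSq u) ∧
  Integrable (fun x => (u x) ^ 2) ∧ Integrable (fun x => Fprim f (u x)) ∧
  Integrable (fun x => f (u x) * u x) ∧ Ifun f u = 0

/-- Radial function. -/
def Radial {d : ℕ} (u : E d → ℝ) : Prop := ∃ v : ℝ → ℝ, ∀ x, u x = v ‖x‖

/-- Hypotheses (H1)-(H6) on the nonlinearity `f` (in dimension `d`). -/
def Hyps (d : ℕ) (f : ℝ → ℝ) : Prop :=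
  -- (H1) regularity: continuous and odd
  (Continuous f ∧ ∀ s, f (-s) = - f s) ∧
  -- (H2) subcriticality
  (∃ p C M : ℝ, 1 < p ∧ (d ≤ 2 ∨ p < 2 * (d:ℝ) / ((d:ℝ) - 2) - 1) ∧
    ∀ s, M ≤ |s| → |f s| ≤ C * |s| ^ p) ∧
  -- (H3) superlinearity at 0
  (Tendsto (fun s => f s / s) (nhdsWithin 0 {(0:ℝ)}ᶜ) (nhds 0)) ∧
  -- (H4) focusing
  (∃ ξ₀ > (0:ℝ), Fprim f ξ₀ > ξ₀ ^ 2 / 2) ∧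
  -- (H5) monotonicity of f(s)/s
  (StrictMonoOn (fun s => f s / s) (Set.Ioi (0:ℝ))) ∧
  -- (H6) Ambrosetti–Rabinowitz
  (∃ θ : ℝ, 2 < θ ∧ ∀ s > (0:ℝ), θ * Fprim f s < s * f s)

/-- Positive part. -/
def posPart' {d : ℕ} (u : E d → ℝ) : E d → ℝ := fun x => max (u x) 0

/-- Negative part. -/
def negPart' {d : ℕ} (u : E d → ℝ) : E d → ℝ := fun x => max (- u x) 0

/-- Pointwise key inequality: strict monotonicity of `s ↦ f(s·a)·(s·a)/s²` for `a ≠ 0`. -/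
lemma key_pointwise (f : ℝ → ℝ) (hf_odd : ∀ s, f (-s) = - f s)
    (hf_mono : StrictMonoOn (fun s => f s / s) (Set.Ioi (0:ℝ)))
    {a s t : ℝ} (ha : a ≠ 0) (hs : 0 < s) (hst : s < t) :
    f (s * a) * (s * a) / s ^ 2 < f (t * a) * (t * a) / t ^ 2 := by
  set b := |a| with hb
  have hb0 : 0 < b := abs_pos.mpr ha
  have hred : ∀ r : ℝ, f (r * a) * (r * a) = f (r * b) * (r * b) := by
    intro r
    rcases abs_choice a with h | h
    · rw [hb, h]
    · rw [hb, h]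
      have : r * a = -(r * -a) := by ring
      rw [this, hf_odd]; ring
  rw [hred s, hred t]
  have ht : 0 < t := hs.trans hst
  have hsb : (0:ℝ) < s * b := mul_pos hs hb0
  have htb : (0:ℝ) < t * b := mul_pos ht hb0
  have hmono := hf_mono (Set.mem_Ioi.mpr hsb) (Set.mem_Ioi.mpr htb)
    (by exact mul_lt_mul_of_pos_right hst hb0)
  simp only at hmono
  have e1 : f (s * b) * (s * b) / s ^ 2 = (f (s * b) / (s * b)) * b ^ 2 := by
    field_simp
  have e2 : f (t * b) * (t * b) / t ^ 2 = (f (t * b) / (t * b)) * b ^ 2 := by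
    field_simp
  rw [e1, e2]
  exact mul_lt_mul_of_pos_right hmono (by positivity)

/-- Core contradiction lemma for `s < t`. -/
lemma key_lt {d : ℕ} (f : ℝ → ℝ) (hf_odd : ∀ s, f (-s) = - f s)
    (hf_mono : StrictMonoOn (fun s => f s / s) (Set.Ioi (0:ℝ)))
    (u : E d → ℝ) (hu : ¬ u =ᵐ[volume] (0 : E d → ℝ))
    (hint : ∀ s > (0:ℝ), Integrable (fun x => f (s * u x) * (s * u x)))
    {s t : ℝ} (hs : 0 < s) (hst : s < t)
    (h1 : s ^ 2 * H1normSq u - (∫ x, f (s * u x) * (s * u x)) = 0)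
    (h2 : t ^ 2 * H1normSq u - (∫ x, f (t * u x) * (t * u x)) = 0) : False := by
  have ht : 0 < t := hs.trans hst
  have hf0 : f 0 = 0 := by
    have := hf_odd 0; simp at this; linarith
  set w : E d → ℝ := fun x =>
    f (t * u x) * (t * u x) / t ^ 2 - f (s * u x) * (s * u x) / s ^ 2 with hw
  have hw_int : Integrable w :=
    ((hint t ht).div_const _).sub ((hint s hs).div_const _)
  have hw_nonneg : ∀ x, 0 ≤ w x := by
    intro x
    rcases eq_or_ne (u x) 0 with h | h
    · simp [hw, h, hf0]
    · exact le_of_lt (sub_pos.mpr (key_pointwise f hf_odd hf_mono h hs hst))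
  have hw_pos : ∀ x, u x ≠ 0 → 0 < w x := fun x h =>
    sub_pos.mpr (key_pointwise f hf_odd hf_mono h hs hst)
  have hsupp : {x | u x ≠ 0} ⊆ Function.support w := by
    intro x hx
    exact ne_of_gt (hw_pos x hx)
  have hμ : 0 < volume {x | u x ≠ 0} := by
    rw [pos_iff_ne_zero]
    intro h0
    exact hu (by rwa [Filter.EventuallyEq, ae_iff])
  have hμw : 0 < volume (Function.support w) :=
    lt_of_lt_of_le hμ (measure_mono hsupp)
  have hpos : 0 < ∫ x, w x := by
    rw [integral_pos_iff_support_of_nonneg_ae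
      (Filter.Eventually.of_forall hw_nonneg) hw_int]
    exact hμw
  have hintegral : ∫ x, w x = 0 := by
    rw [hw]
    rw [integral_sub ((hint t ht).div_const _) ((hint s hs).div_const _)]
    rw [integral_div, integral_div]
    have e1 : (∫ x, f (s * u x) * (s * u x)) = s ^ 2 * H1normSq u := by linarith
    have e2 : (∫ x, f (t * u x) * (t * u x)) = t ^ 2 * H1normSq u := by linarith
    rw [e1, e2]
    field_simp; ring
  rw [hintegral] at hpos
  exact lt_irrefl 0 hpos

/-- for `f` continuous, odd, with `f(s)/s` strictly increasing on `(0,∞)`,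
and `u ∈ H¹(ℝᵈ) \ {0}`, the Nehari functional
`I(su) = s²‖u‖²_{H¹} − ∫ f(su)·su dx` vanishes at most once for `s ∈ (0,∞)`. -/
theorem stmt_0 {d : ℕ} (f : ℝ → ℝ)
    (hf_cont : Continuous f) (hf_odd : ∀ s, f (-s) = - f s)
    (hf_mono : StrictMonoOn (fun s => f s / s) (Set.Ioi (0:ℝ)))
    (u : E d → ℝ) (hu : ¬ u =ᵐ[volume] (0 : E d → ℝ))
    (hgrad : Integrable (gradSq u)) (hL2 : Integrable (fun x => (u x) ^ 2))
    (hint : ∀ s > (0:ℝ), Integrable (fun x => f (s * u x) * (s * u x))) :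
    ∀ s₁ ∈ Set.Ioi (0:ℝ), ∀ s₂ ∈ Set.Ioi (0:ℝ),
      s₁ ^ 2 * H1normSq u - (∫ x, f (s₁ * u x) * (s₁ * u x)) = 0 →
      s₂ ^ 2 * H1normSq u - (∫ x, f (s₂ * u x) * (s₂ * u x)) = 0 →
      s₁ = s₂ := by
  intro s₁ hs₁ s₂ hs₂ h1 h2
  rcases lt_trichotomy s₁ s₂ with h | h | h
  · exact absurd (key_lt f hf_odd hf_mono u hu hint hs₁ h h1 h2) id
  · exact h
  · exact absurd (key_lt f hf_odd hf_mono u hu hint hs₂ h h2 h1) id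
end
end

section
/- Suppose f: ℝ → ℝ is continuous with F(s) = ∫₀^s f(t) dt satisfying θF(s) ≤ s f(s) for all s > 0 for some θ > 2, and F(s₀) > 0 for some s₀ > 0. Then F(s)/s² → ∞ as s → ∞. -/
open MeasureTheory Real Set Filter

/-- if `f` is continuous, `θ > 2` with `θF(s) ≤ s f(s)` for all `s > 0`
(`F(s) = ∫₀ˢ f`), and `F(s₀) > 0` for some `s₀ > 0`, then `F(s)/s² → ∞` as `s → ∞`. -/
theorem stmt_2 (f : ℝ → ℝ) (hf : Continuous f) (θ : ℝ) (hθ : 2 < θ)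
    (hAR : ∀ s > (0:ℝ), θ * (∫ t in (0:ℝ)..s, f t) ≤ s * f s)
    (h0 : ∃ s₀ > (0:ℝ), (∫ t in (0:ℝ)..s₀, f t) > 0) :
    Tendsto (fun s => (∫ t in (0:ℝ)..s, f t) / s ^ 2) atTop atTop := by
  obtain ⟨s₀, hs₀, hF₀⟩ := h0
  set F : ℝ → ℝ := fun s => ∫ t in (0:ℝ)..s, f t with hFdef
  have hFderiv : ∀ s : ℝ, HasDerivAt F (f s) s := fun s =>
    intervalIntegral.integral_hasDerivAt_right (hf.intervalIntegrable _ _)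
      (hf.stronglyMeasurable.stronglyMeasurableAtFilter) hf.continuousAt
  set G : ℝ → ℝ := fun s => F s * s ^ (-θ) with hGdef
  have hGderiv : ∀ s ∈ Ioi s₀, HasDerivAt G (s ^ (-θ - 1) * (s * f s - θ * F s)) s := by
    intro s hs
    have hspos : 0 < s := hs₀.trans hs
    have h1 : HasDerivAt (fun s : ℝ => s ^ (-θ)) (-θ * s ^ (-θ - 1)) s := by
      simpa using Real.hasDerivAt_rpow_const (p := -θ) (Or.inl hspos.ne')
    have h2 := (hFderiv s).mul h1
    have hs1 : s ^ (-θ - 1) * s = s ^ (-θ) := by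
      rw [← Real.rpow_add_one hspos.ne' (-θ - 1)]; ring_nf
    refine h2.congr_deriv ?_
    linear_combination (-f s) * hs1
  have hmono : MonotoneOn G (Ici s₀) := by
    apply monotoneOn_of_deriv_nonneg (convex_Ici s₀)
    · apply ContinuousOn.mul
      · exact fun x _ => ((hFderiv x).continuousAt).continuousWithinAt
      · intro x hx
        exact (Real.continuousAt_rpow_const x (-θ)
          (Or.inl (hs₀.trans_le hx).ne')).continuousWithinAt
    · rw [interior_Ici]
      exact fun x hx => (hGderiv x hx).differentiableAt.differentiableWithinAt
    · rw [interior_Ici]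
      intro x hx
      rw [(hGderiv x hx).deriv]
      have hxpos : 0 < x := hs₀.trans hx
      apply mul_nonneg (Real.rpow_nonneg hxpos.le _)
      linarith [hAR x hxpos]
  set c : ℝ := F s₀ * s₀ ^ (-θ) with hc
  have hcpos : 0 < c := mul_pos hF₀ (Real.rpow_pos_of_pos hs₀ _)
  have key : ∀ s ≥ s₀, c * s ^ (θ - 2) ≤ F s / s ^ 2 := by
    intro s hs
    have hspos : 0 < s := hs₀.trans_le hs
    have hGs : c ≤ G s := hmono self_mem_Ici hs hs
    have hFs : c * s ^ θ ≤ F s := by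
      have := mul_le_mul_of_nonneg_right hGs (Real.rpow_pos_of_pos hspos θ).le
      have hx : s ^ (-θ) * s ^ θ = 1 := by
        rw [← Real.rpow_add hspos]; simp
      calc c * s ^ θ ≤ G s * s ^ θ := this
        _ = F s * (s ^ (-θ) * s ^ θ) := by ring
        _ = F s := by rw [hx, mul_one]
    have heq : c * s ^ (θ - 2) = c * s ^ θ / s ^ 2 := by
      rw [eq_div_iff (by positivity : (s : ℝ) ^ 2 ≠ 0), ← Real.rpow_natCast s 2,
        mul_assoc, ← Real.rpow_add hspos]
      norm_num
    rw [heq]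
    gcongr
  have htend : Tendsto (fun s : ℝ => c * s ^ (θ - 2)) atTop atTop :=
    (tendsto_rpow_atTop (by linarith)).const_mul_atTop hcpos
  exact tendsto_atTop_mono' atTop (eventually_atTop.2 ⟨s₀, key⟩) htend
end

section
/- Under hypotheses (H1)–(H6) on f, for every u ∈ H¹(ℝᵈ) \ {0} there exists a unique s_u ∈ (0,∞) such that I(s_u u) = 0, and moreover S(s_u u) = max_{s>0} S(su) > 0. If I(u) < 0 then s_u < 1, and if I(u) > 0 then s_u > 1 and S(u) > 0. -/
open MeasureTheory Real Set Filter

noncomputable section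

/- Auxiliary lemmas -/

section scalar
variable {f : ℝ → ℝ}

lemma f_zero (hodd : ∀ s, f (-s) = - f s) : f 0 = 0 := by
  have := hodd 0; simp only [neg_zero] at this; linarith

lemma q_pos (hmono : StrictMonoOn (fun s => f s / s) (Set.Ioi (0:ℝ)))
    (hlim : Tendsto (fun s => f s / s) (nhdsWithin 0 {(0:ℝ)}ᶜ) (nhds 0))
    {t : ℝ} (ht : 0 < t) : 0 < f t / t := by
  have h2 : 0 ≤ f (t/2) / (t/2) := by
    have hl : Tendsto (fun s => f s / s) (nhdsWithin 0 (Set.Ioi 0)) (nhds 0) :=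
      hlim.mono_left (nhdsWithin_mono _ (fun x hx => ne_of_gt hx))
    refine le_of_tendsto hl ?_
    filter_upwards [self_mem_nhdsWithin, Ioo_mem_nhdsGT (by linarith : (0:ℝ) < t/2)]
      with x hx1 hx2
    exact (hmono hx1 (by simpa using half_pos ht) hx2.2).le
  calc (0:ℝ) ≤ f (t/2) / (t/2) := h2
    _ < f t / t := hmono (by simpa using half_pos ht) ht (by linarith)

lemma f_pos (hmono : StrictMonoOn (fun s => f s / s) (Set.Ioi (0:ℝ)))
    (hlim : Tendsto (fun s => f s / s) (nhdsWithin 0 {(0:ℝ)}ᶜ) (nhds 0))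
    {t : ℝ} (ht : 0 < t) : 0 < f t := by
  have h := mul_pos (q_pos hmono hlim ht) ht
  rwa [div_mul_cancel₀ _ (ne_of_gt ht)] at h

/-- `f t * t = q(|t|) * t²` where `q s = f s / s`. -/
lemma fmul_eq (hodd : ∀ s, f (-s) = - f s) (t : ℝ) :
    f t * t = (f |t| / |t|) * t ^ 2 := by
  rcases lt_trichotomy t 0 with h | h | h
  · rw [abs_of_neg h]
    have : f (-t) = - f t := hodd t
    field_simp [ne_of_gt (neg_pos.mpr h)]
    ring_nf
    rw [this]; ring
  · simp [h, f_zero hodd]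
  · rw [abs_of_pos h]; field_simp [ne_of_gt h]

/-- monotonicity of `s ↦ f(s t)·(s t)` in `s > 0`. -/
lemma fmul_mono (hodd : ∀ s, f (-s) = - f s)
    (hmono : StrictMonoOn (fun s => f s / s) (Set.Ioi (0:ℝ)))
    (hlim : Tendsto (fun s => f s / s) (nhdsWithin 0 {(0:ℝ)}ᶜ) (nhds 0))
    {s₁ s₂ : ℝ} (h1 : 0 < s₁) (h12 : s₁ ≤ s₂) (t : ℝ) :
    f (s₁ * t) * (s₁ * t) ≤ f (s₂ * t) * (s₂ * t) := by
  rcases eq_or_ne t 0 with rfl | ht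
  · simp [f_zero hodd]
  rw [fmul_eq hodd, fmul_eq hodd]
  have habs : (0:ℝ) < |t| := abs_pos.mpr ht
  have e1 : |s₁ * t| = s₁ * |t| := by rw [abs_mul, abs_of_pos h1]
  have e2 : |s₂ * t| = s₂ * |t| := by rw [abs_mul, abs_of_pos (lt_of_lt_of_le h1 h12)]
  rw [e1, e2, mul_pow, mul_pow]
  have hq1 : 0 < f (s₁ * |t|) / (s₁ * |t|) := q_pos hmono hlim (by positivity)
  have h2 : (0:ℝ) < s₂ := lt_of_lt_of_le h1 h12
  have hq12 : f (s₁ * |t|) / (s₁ * |t|) ≤ f (s₂ * |t|) / (s₂ * |t|) := by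
    rcases eq_or_lt_of_le h12 with rfl | hlt
    · exact le_refl _
    · exact (hmono (mem_Ioi.mpr (by positivity)) (mem_Ioi.mpr (by positivity))
        (by nlinarith)).le
  have hs : s₁^2 ≤ s₂^2 := by nlinarith
  exact mul_le_mul hq12 (mul_le_mul_of_nonneg_right hs (sq_nonneg t)) (by positivity)
    (le_of_lt (lt_of_lt_of_le hq1 hq12))

lemma fmul_strictmono (hodd : ∀ s, f (-s) = - f s)
    (hmono : StrictMonoOn (fun s => f s / s) (Set.Ioi (0:ℝ)))
    (hlim : Tendsto (fun s => f s / s) (nhdsWithin 0 {(0:ℝ)}ᶜ) (nhds 0))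
    {s₁ s₂ : ℝ} (h1 : 0 < s₁) (h12 : s₁ < s₂) {t : ℝ} (ht : t ≠ 0) :
    f (s₁ * t) * (s₁ * t) < f (s₂ * t) * (s₂ * t) := by
  rw [fmul_eq hodd, fmul_eq hodd]
  have habs : (0:ℝ) < |t| := abs_pos.mpr ht
  have h2 : (0:ℝ) < s₂ := lt_trans h1 h12
  have e1 : |s₁ * t| = s₁ * |t| := by rw [abs_mul, abs_of_pos h1]
  have e2 : |s₂ * t| = s₂ * |t| := by rw [abs_mul, abs_of_pos h2]
  rw [e1, e2, mul_pow, mul_pow]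
  have hq1 : 0 < f (s₁ * |t|) / (s₁ * |t|) := q_pos hmono hlim (by positivity)
  have hq12 : f (s₁ * |t|) / (s₁ * |t|) < f (s₂ * |t|) / (s₂ * |t|) :=
    hmono (mem_Ioi.mpr (by positivity)) (mem_Ioi.mpr (by positivity)) (by nlinarith)
  have hs : s₁^2 ≤ s₂^2 := by nlinarith
  exact mul_lt_mul hq12 (mul_le_mul_of_nonneg_right hs (sq_nonneg t)) (by positivity)
    (le_of_lt (lt_trans hq1 hq12))

lemma fmul_nonneg (hodd : ∀ s, f (-s) = - f s)
    (hmono : StrictMonoOn (fun s => f s / s) (Set.Ioi (0:ℝ)))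
    (hlim : Tendsto (fun s => f s / s) (nhdsWithin 0 {(0:ℝ)}ᶜ) (nhds 0))
    (t : ℝ) : 0 ≤ f t * t := by
  rcases eq_or_ne t 0 with rfl | ht
  · simp
  · have := fmul_eq hodd t
    rw [this]
    have := q_pos hmono hlim (abs_pos.mpr ht)
    positivity

end scalar



section scalar2
variable {f : ℝ → ℝ}

lemma Fprim_even (hodd : ∀ s, f (-s) = - f s) (t : ℝ) : Fprim f (-t) = Fprim f t := by
  unfold Fprim
  have : (∫ s in (t:ℝ)..0, f (-s)) = ∫ s in (0:ℝ)..(-t), f s := by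
    simpa using intervalIntegral.integral_comp_neg (a := t) (b := 0) f
  rw [← this]
  simp only [hodd]
  rw [intervalIntegral.integral_neg, intervalIntegral.integral_symm]
  ring_nf

-- f monotone on positives (from q mono and q pos)
lemma f_mono_pos (hmono : StrictMonoOn (fun s => f s / s) (Set.Ioi (0:ℝ)))
    (hlim : Tendsto (fun s => f s / s) (nhdsWithin 0 {(0:ℝ)}ᶜ) (nhds 0))
    {s x : ℝ} (hs : 0 < s) (hsx : s ≤ x) : f s ≤ f x := by
  rcases eq_or_lt_of_le hsx with rfl | h
  · exact le_refl _
  have hx : 0 < x := lt_trans hs h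
  have hq := (hmono (mem_Ioi.mpr hs) (mem_Ioi.mpr hx) h).le
  have h1 : f s / s * s ≤ f x / x * x := by
    have hqpos : 0 < f s / s := q_pos hmono hlim hs
    exact mul_le_mul hq hsx hs.le (le_of_lt (lt_of_lt_of_le hqpos hq))
  rwa [div_mul_cancel₀ _ (ne_of_gt hs), div_mul_cancel₀ _ (ne_of_gt hx)] at h1

lemma Fprim_le_half (hcont : Continuous f) (hodd : ∀ s, f (-s) = - f s)
    (hmono : StrictMonoOn (fun s => f s / s) (Set.Ioi (0:ℝ)))
    (hlim : Tendsto (fun s => f s / s) (nhdsWithin 0 {(0:ℝ)}ᶜ) (nhds 0))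
    (t : ℝ) : Fprim f t ≤ f t * t / 2 := by
  -- reduce to t ≥ 0
  have key : ∀ t : ℝ, 0 ≤ t → Fprim f t ≤ f t * t / 2 := by
    intro t ht
    rcases eq_or_lt_of_le ht with rfl | ht
    · simp [Fprim]
    have hle : Fprim f t ≤ ∫ s in (0:ℝ)..t, (f t / t) * s := by
      apply intervalIntegral.integral_mono_on ht.le (hcont.intervalIntegrable _ _)
        ((continuous_const.mul continuous_id).intervalIntegrable _ _)
      intro x hx
      rcases eq_or_lt_of_le hx.1 with rfl | hx0
      · simp [f_zero hodd]
      have hq : f x / x ≤ f t / t := by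
        rcases eq_or_lt_of_le hx.2 with rfl | hxt
        · exact le_refl _
        · exact (hmono (mem_Ioi.mpr hx0) (mem_Ioi.mpr ht) hxt).le
      calc f x = f x / x * x := by rw [div_mul_cancel₀ _ (ne_of_gt hx0)]
        _ ≤ f t / t * x := mul_le_mul_of_nonneg_right hq hx0.le
    have : (∫ s in (0:ℝ)..t, (f t / t) * s) = f t * t / 2 := by
      rw [intervalIntegral.integral_const_mul, integral_id]
      field_simp
      ring
    linarith [hle, this.symm ▸ hle]
  rcases le_or_gt 0 t with ht | ht
  · exact key t ht
  · have := key (-t) (by linarith)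
    rw [Fprim_even hodd] at this
    rw [hodd] at this  -- f (-t) = - f t ... careful
    calc Fprim f t ≤ (- f t) * (-t) / 2 := this
      _ = f t * t / 2 := by ring

lemma Fprim_one_pos (hcont : Continuous f)
    (hmono : StrictMonoOn (fun s => f s / s) (Set.Ioi (0:ℝ)))
    (hlim : Tendsto (fun s => f s / s) (nhdsWithin 0 {(0:ℝ)}ᶜ) (nhds 0)) :
    0 < Fprim f 1 := by
  apply intervalIntegral.intervalIntegral_pos_of_pos_on (hcont.intervalIntegrable _ _)
  · intro x hx; exact f_pos hmono hlim hx.1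
  · norm_num

/-- Unboundedness of `q = f(t)/t` from Ambrosetti–Rabinowitz. -/
lemma q_unbounded (hcont : Continuous f) (hodd : ∀ s, f (-s) = - f s)
    (hmono : StrictMonoOn (fun s => f s / s) (Set.Ioi (0:ℝ)))
    (hlim : Tendsto (fun s => f s / s) (nhdsWithin 0 {(0:ℝ)}ᶜ) (nhds 0))
    {θ : ℝ} (hθ : 2 < θ) (hAR : ∀ s > (0:ℝ), θ * Fprim f s < s * f s)
    (C : ℝ) : ∃ t > 0, C < f t / t := by
  set lam : ℝ := 1 + (θ - 2) / 2 with hlam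
  have hlam1 : 1 < lam := by rw [hlam]; linarith
  have hlampos : (0:ℝ) < lam := by linarith
  have hFpos : ∀ s > (0:ℝ), 0 < Fprim f s := by
    intro s hs
    apply intervalIntegral.intervalIntegral_pos_of_pos_on (hcont.intervalIntegrable _ _)
    · intro x hx; exact f_pos hmono hlim hx.1
    · exact hs
  -- doubling estimate
  have hdouble : ∀ s > (0:ℝ), (1 + (lam - 1) * θ) * Fprim f s ≤ Fprim f (lam * s) := by
    intro s hs
    have hsplit : Fprim f (lam * s) = Fprim f s + ∫ x in s..(lam * s), f x := by
      rw [Fprim, Fprim, intervalIntegral.integral_add_adjacent_intervals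
        (hcont.intervalIntegrable _ _) (hcont.intervalIntegrable _ _)]
    have hineq : (lam - 1) * s * f s ≤ ∫ x in s..(lam * s), f x := by
      have hconst : (∫ x in s..(lam * s), f s) = (lam * s - s) * f s := by
        simp [intervalIntegral.integral_const, smul_eq_mul]
      have := intervalIntegral.integral_mono_on (μ := volume) (by nlinarith : s ≤ lam * s)
        ((continuous_const (y := f s)).intervalIntegrable _ _) (hcont.intervalIntegrable _ _)
        (fun x hx => f_mono_pos hmono hlim hs hx.1)
      rw [hconst] at this
      calc (lam - 1) * s * f s = (lam * s - s) * f s := by ring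
        _ ≤ _ := this
    have hAR' := hAR s hs
    nlinarith [hFpos s hs]
  -- induction: Fprim f (lam^n) ≥ Fprim f 1 * (1+(lam-1)θ)^n
  have hr1 : (1:ℝ) < 1 + (lam - 1) * θ := by nlinarith
  have hind : ∀ n : ℕ, Fprim f 1 * (1 + (lam - 1) * θ) ^ n ≤ Fprim f (lam ^ n) := by
    intro n
    induction n with
    | zero => simp
    | succ n ih =>
      have h1 := hdouble (lam ^ n) (pow_pos hlampos n)
      calc Fprim f 1 * (1 + (lam - 1) * θ) ^ (n+1)
          = (1 + (lam - 1) * θ) * (Fprim f 1 * (1 + (lam - 1) * θ) ^ n) := by ring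
        _ ≤ (1 + (lam - 1) * θ) * Fprim f (lam ^ n) := by
            apply mul_le_mul_of_nonneg_left ih (by linarith)
        _ ≤ Fprim f (lam * lam ^ n) := h1
        _ = Fprim f (lam ^ (n+1)) := by rw [pow_succ]; ring_nf
  -- q(lam^n) ≥ θ F(lam^n) / lam^(2n) ≥ θ F(1) ((1+(lam-1)θ)/lam²)^n
  have hratio : (1:ℝ) < (1 + (lam - 1) * θ) / lam ^ 2 := by
    rw [lt_div_iff₀ (by positivity)]
    have : lam + 1 < θ := by rw [hlam]; linarith
    nlinarith
  have htend : Tendsto (fun n : ℕ => θ * Fprim f 1 * ((1 + (lam - 1) * θ) / lam ^ 2) ^ n)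
      atTop atTop := by
    apply Tendsto.const_mul_atTop
      (mul_pos (by linarith : (0:ℝ) < θ) (Fprim_one_pos hcont hmono hlim))
      (tendsto_pow_atTop_atTop_of_one_lt hratio)
  obtain ⟨n, hn⟩ := (htend.eventually_gt_atTop C).exists
  refine ⟨lam ^ n, pow_pos hlampos n, lt_of_lt_of_le hn ?_⟩
  have hARn := hAR (lam ^ n) (pow_pos hlampos n)
  have hFn := hind n
  have hpow : (lam ^ n) ^ 2 = (lam ^ 2) ^ n := by rw [← pow_mul, ← pow_mul, Nat.mul_comm]
  have h1 : θ * Fprim f (lam ^ n) / (lam ^ n) ^ 2 ≤ f (lam ^ n) / lam ^ n := by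
    rw [div_le_div_iff₀ (by positivity) (by positivity)]
    have hln : (0:ℝ) < lam ^ n := pow_pos hlampos n
    nlinarith [hARn]
  refine le_trans ?_ h1
  rw [le_div_iff₀ (by positivity), hpow]
  have : θ * Fprim f 1 * ((1 + (lam - 1) * θ) / lam ^ 2) ^ n * (lam ^ 2) ^ n
      = θ * (Fprim f 1 * (1 + (lam - 1) * θ) ^ n) := by
    rw [div_pow, mul_assoc, div_mul_cancel₀ _ (by positivity : (((lam:ℝ)^2)^n) ≠ 0)]
    ring
  rw [this]
  nlinarith [hFn]
end scalar2

section integralaux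
variable {d : ℕ} {f : ℝ → ℝ} {u : E d → ℝ}

lemma H1_pos (hu : ¬ u =ᵐ[volume] (0 : E d → ℝ))
    (hgrad : Integrable (gradSq u)) (hL2 : Integrable (fun x => (u x) ^ 2)) :
    0 < H1normSq u := by
  have h1 : 0 ≤ ∫ x, gradSq u x := integral_nonneg (fun x => by simp only [gradSq]; positivity)
  have h2 : 0 < ∫ x, (u x) ^ 2 := by
    rw [integral_pos_iff_support_of_nonneg (fun x => sq_nonneg _) hL2]
    have hsupp : (Function.support fun x => (u x) ^ 2) = {x | u x ≠ 0} := by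
      ext x; simp [Function.support, pow_eq_zero_iff]
    rw [hsupp]
    by_contra h
    push_neg at h
    apply hu
    have h0 : volume {x | u x ≠ 0} = 0 := le_antisymm h (by simp)
    exact (ae_iff).mpr h0
  unfold H1normSq; linarith

lemma uset_pos (hu : ¬ u =ᵐ[volume] (0 : E d → ℝ)) : 0 < volume {x | u x ≠ 0} := by
  by_contra h
  push_neg at h
  exact hu ((ae_iff).mpr (le_antisymm h (by simp)))

/-- `φ s = (∫ f(su)·su)/s²` as one integral. -/
lemma phi_eq (hodd : ∀ s, f (-s) = - f s) {s : ℝ} (hs : 0 < s) :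
    (∫ x, (f (s * |u x|) / (s * |u x|)) * (u x) ^ 2)
      = (∫ x, f (s * u x) * (s * u x)) / s ^ 2 := by
  rw [← integral_div]
  congr 1
  funext x
  rw [fmul_eq hodd (s * u x), abs_mul, abs_of_pos hs]
  rcases eq_or_ne (u x) 0 with h | h
  · simp [h]
  · field_simp

lemma phi_integrable (hodd : ∀ s, f (-s) = - f s)
    (hint : Integrable (fun x => f (s * u x) * (s * u x))) (hs : 0 < s) :
    Integrable (fun x => (f (s * |u x|) / (s * |u x|)) * (u x) ^ 2) := by
  have : (fun x => (f (s * |u x|) / (s * |u x|)) * (u x) ^ 2)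
      = fun x => (f (s * u x) * (s * u x)) / s ^ 2 := by
    funext x
    rw [fmul_eq hodd (s * u x), abs_mul, abs_of_pos hs]
    rcases eq_or_ne (u x) 0 with h | h
    · simp [h]
    · field_simp
  rw [this]
  exact hint.div_const _

end integralaux

section scalar3
variable {f : ℝ → ℝ}

lemma qmul_mono (hmono : StrictMonoOn (fun s => f s / s) (Set.Ioi (0:ℝ)))
    {s₁ s₂ : ℝ} (h1 : 0 < s₁) (h12 : s₁ ≤ s₂) (t : ℝ) :
    (f (s₁ * |t|) / (s₁ * |t|)) * t ^ 2 ≤ (f (s₂ * |t|) / (s₂ * |t|)) * t ^ 2 := by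
  rcases eq_or_ne t 0 with rfl | ht
  · simp
  have habs : (0:ℝ) < |t| := abs_pos.mpr ht
  rcases eq_or_lt_of_le h12 with rfl | hlt
  · exact le_refl _
  have h2 : (0:ℝ) < s₂ := lt_trans h1 hlt
  exact mul_le_mul_of_nonneg_right
    (hmono (Set.mem_Ioi.mpr (by positivity)) (Set.mem_Ioi.mpr (by positivity))
      (by nlinarith)).le (sq_nonneg t)

lemma qmul_strict (hmono : StrictMonoOn (fun s => f s / s) (Set.Ioi (0:ℝ)))
    {s₁ s₂ : ℝ} (h1 : 0 < s₁) (h12 : s₁ < s₂) {t : ℝ} (ht : t ≠ 0) :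
    (f (s₁ * |t|) / (s₁ * |t|)) * t ^ 2 < (f (s₂ * |t|) / (s₂ * |t|)) * t ^ 2 := by
  have habs : (0:ℝ) < |t| := abs_pos.mpr ht
  have h2 : (0:ℝ) < s₂ := lt_trans h1 h12
  exact mul_lt_mul_of_pos_right
    (hmono (Set.mem_Ioi.mpr (by positivity)) (Set.mem_Ioi.mpr (by positivity))
      (by nlinarith)) (by positivity)

lemma qmul_nonneg (hmono : StrictMonoOn (fun s => f s / s) (Set.Ioi (0:ℝ)))
    (hlim : Filter.Tendsto (fun s => f s / s) (nhdsWithin 0 {(0:ℝ)}ᶜ) (nhds 0))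
    {s : ℝ} (hs : 0 < s) (t : ℝ) : 0 ≤ (f (s * |t|) / (s * |t|)) * t ^ 2 := by
  rcases eq_or_ne t 0 with rfl | ht
  · simp
  have habs : (0:ℝ) < |t| := abs_pos.mpr ht
  exact le_of_lt (mul_pos (q_pos hmono hlim (by positivity)) (by positivity))

end scalar3

section integralaux2
variable {d : ℕ} {f : ℝ → ℝ} {u : E d → ℝ}

lemma phi_strictMono (hodd : ∀ s, f (-s) = - f s)
    (hmono : StrictMonoOn (fun s => f s / s) (Set.Ioi (0:ℝ)))
    (hlim : Filter.Tendsto (fun s => f s / s) (nhdsWithin 0 {(0:ℝ)}ᶜ) (nhds 0))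
    (hu : ¬ u =ᵐ[volume] (0 : E d → ℝ))
    {s₁ s₂ : ℝ} (h1 : 0 < s₁) (h12 : s₁ < s₂)
    (hi1 : Integrable (fun x => (f (s₁ * |u x|) / (s₁ * |u x|)) * (u x) ^ 2))
    (hi2 : Integrable (fun x => (f (s₂ * |u x|) / (s₂ * |u x|)) * (u x) ^ 2)) :
    (∫ x, (f (s₁ * |u x|) / (s₁ * |u x|)) * (u x) ^ 2)
      < ∫ x, (f (s₂ * |u x|) / (s₂ * |u x|)) * (u x) ^ 2 := by
  have hdiff : 0 < ∫ x, ((f (s₂ * |u x|) / (s₂ * |u x|)) * (u x) ^ 2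
      - (f (s₁ * |u x|) / (s₁ * |u x|)) * (u x) ^ 2) := by
    rw [integral_pos_iff_support_of_nonneg]
    · refine lt_of_lt_of_le (uset_pos hu) (measure_mono ?_)
      intro x hx
      simp only [Function.mem_support]
      have := qmul_strict hmono h1 h12 (t := u x) hx
      intro hcontra
      linarith [this, sub_eq_zero.mp hcontra]
    · intro x
      simp only [Pi.zero_apply, sub_nonneg]
      exact qmul_mono hmono h1 h12.le (u x)
    · exact hi2.sub hi1
  rw [integral_sub hi2 hi1] at hdiff
  linarith

lemma G_continuousAt (hcont : Continuous f) (hodd : ∀ s, f (-s) = - f s)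
    (hmono : StrictMonoOn (fun s => f s / s) (Set.Ioi (0:ℝ)))
    (hlim : Filter.Tendsto (fun s => f s / s) (nhdsWithin 0 {(0:ℝ)}ᶜ) (nhds 0))
    (hintf : ∀ s > (0:ℝ), Integrable (fun x => f (s * u x) * (s * u x)))
    {s₀ : ℝ} (hs₀ : 0 < s₀) :
    ContinuousAt (fun s => ∫ x, f (s * u x) * (s * u x)) s₀ := by
  have hnb : Set.Ioo (s₀/2) (2*s₀) ∈ nhds s₀ := Ioo_mem_nhds (by linarith) (by linarith)
  apply continuousAt_of_dominated (bound := fun x => f (2*s₀ * u x) * (2*s₀ * u x))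
  · filter_upwards [hnb] with s hs
    exact (hintf s (lt_trans (by linarith) hs.1)).aestronglyMeasurable
  · filter_upwards [hnb] with s hs
    apply Filter.Eventually.of_forall
    intro x
    have hspos : 0 < s := lt_trans (by linarith) hs.1
    rw [Real.norm_eq_abs, abs_of_nonneg (fmul_nonneg hodd hmono hlim _)]
    exact fmul_mono hodd hmono hlim hspos hs.2.le (u x)
  · exact hintf (2*s₀) (by linarith)
  · apply Filter.Eventually.of_forall
    intro x
    have : Continuous (fun s : ℝ => f (s * u x) * (s * u x)) := by
      exact ((hcont.comp (continuous_id.mul continuous_const)).mul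
        (continuous_id.mul continuous_const))
    exact this.continuousAt

end integralaux2

section integralaux3
variable {d : ℕ} {f : ℝ → ℝ} {u : E d → ℝ}

lemma phi_small (hodd : ∀ s, f (-s) = - f s)
    (hmono : StrictMonoOn (fun s => f s / s) (Set.Ioi (0:ℝ)))
    (hlim : Filter.Tendsto (fun s => f s / s) (nhdsWithin 0 {(0:ℝ)}ᶜ) (nhds 0))
    (hintf : ∀ s > (0:ℝ), Integrable (fun x => f (s * u x) * (s * u x)))
    {A : ℝ} (hA : 0 < A) :
    ∃ a : ℝ, 0 < a ∧ (∫ x, (f (a * |u x|) / (a * |u x|)) * (u x) ^ 2) < A := by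
  set F : ℕ → E d → ℝ :=
    fun n x => (f ((1/(n+1)) * |u x|) / ((1/(n+1)) * |u x|)) * (u x) ^ 2 with hF
  have hsn : ∀ n : ℕ, (0:ℝ) < 1/(n+1) := fun n => by positivity
  have hsn1 : ∀ n : ℕ, (1:ℝ)/(n+1) ≤ 1 := by
    intro n
    rw [div_le_one (by positivity)]
    simp
  have htend : Filter.Tendsto (fun n : ℕ => ∫ x, F n x) Filter.atTop (nhds 0) := by
    have h0 : (0:ℝ) = ∫ (_ : E d), (0:ℝ) := by simp
    rw [h0]
    apply tendsto_integral_filter_of_dominated_convergence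
      (bound := fun x => (f (1 * |u x|) / (1 * |u x|)) * (u x) ^ 2)
    · exact Filter.Eventually.of_forall fun n =>
        (phi_integrable hodd (hintf _ (hsn n)) (hsn n)).aestronglyMeasurable
    · refine Filter.Eventually.of_forall fun n => Filter.Eventually.of_forall fun x => ?_
      rw [Real.norm_eq_abs, abs_of_nonneg (qmul_nonneg hmono hlim (hsn n) (u x))]
      exact qmul_mono hmono (hsn n) (hsn1 n) (u x)
    · exact phi_integrable hodd (by simpa using hintf 1 one_pos) one_pos
    · refine Filter.Eventually.of_forall fun x => ?_
      rcases eq_or_ne (u x) 0 with h | h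
      · simp only [hF, h, abs_zero, mul_zero, ne_eq, OfNat.ofNat_ne_zero,
          not_false_eq_true, zero_pow, pow_two]
        simpa using tendsto_const_nhds
      · have habs : (0:ℝ) < |u x| := abs_pos.mpr h
        have h1 : Filter.Tendsto (fun n : ℕ => (1/(n+1:ℝ)) * |u x|) Filter.atTop (nhds 0) := by
          have := tendsto_one_div_add_atTop_nhds_zero_nat (𝕜 := ℝ)
          simpa using this.mul_const |u x|
        have h2 : Filter.Tendsto (fun n : ℕ => (1/(n+1:ℝ)) * |u x|) Filter.atTop
            (nhdsWithin 0 {(0:ℝ)}ᶜ) := by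
          apply tendsto_nhdsWithin_of_tendsto_nhds_of_eventually_within _ h1
          exact Filter.Eventually.of_forall fun n => by
            simp only [Set.mem_compl_iff, Set.mem_singleton_iff]
            positivity
        have h3 := (hlim.comp h2).mul_const ((u x) ^ 2)
        have h0' : (0:ℝ) * (u x) ^ 2 = 0 := by ring
        rw [h0'] at h3
        exact h3
  obtain ⟨n, hn⟩ := (htend.eventually_lt_const hA).exists
  exact ⟨1/(n+1), hsn n, hn⟩

lemma phi_large (hcont : Continuous f) (hodd : ∀ s, f (-s) = - f s)
    (hmono : StrictMonoOn (fun s => f s / s) (Set.Ioi (0:ℝ)))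
    (hlim : Filter.Tendsto (fun s => f s / s) (nhdsWithin 0 {(0:ℝ)}ᶜ) (nhds 0))
    {θ : ℝ} (hθ : 2 < θ) (hAR : ∀ s > (0:ℝ), θ * Fprim f s < s * f s)
    (hu : ¬ u =ᵐ[volume] (0 : E d → ℝ)) (hL2 : Integrable (fun x => (u x) ^ 2))
    (hintf : ∀ s > (0:ℝ), Integrable (fun x => f (s * u x) * (s * u x)))
    (A a : ℝ) :
    ∃ b : ℝ, a < b ∧ 0 < b ∧ A < ∫ x, (f (b * |u x|) / (b * |u x|)) * (u x) ^ 2 := by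
  -- measurable representative of |u|
  have hw : AEStronglyMeasurable (fun x : E d => |u x|) volume := by
    have h1 := hL2.aestronglyMeasurable
    have h2 := (Real.continuous_sqrt.comp_aestronglyMeasurable h1)
    have : (fun x : E d => Real.sqrt ((u x)^2)) = fun x => |u x| := by
      funext x; exact Real.sqrt_sq_eq_abs _
    rwa [this] at h2
  set v := hw.mk _ with hvdef
  have hvmeas : StronglyMeasurable v := hw.stronglyMeasurable_mk
  have hvae : (fun x : E d => |u x|) =ᵐ[volume] v := hw.ae_eq_mk
  -- positive measure of {v > 0}
  have hupos := uset_pos hu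
  have hvpos : 0 < volume {x | 0 < v x} := by
    have hsub : {x | u x ≠ 0} ⊆ {x | 0 < v x} ∪ {x | ¬ |u x| = v x} := by
      intro x hx
      by_cases hxx : |u x| = v x
      · left; simp only [Set.mem_setOf_eq]; rw [← hxx]; exact abs_pos.mpr hx
      · right; exact hxx
    calc 0 < volume {x | u x ≠ 0} := hupos
      _ ≤ volume ({x | 0 < v x} ∪ {x | ¬ |u x| = v x}) := measure_mono hsub
      _ ≤ volume {x | 0 < v x} + volume {x | ¬ |u x| = v x} := measure_union_le _ _
      _ = volume {x | 0 < v x} := by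
          have hnull : volume {x | ¬ |u x| = v x} = 0 := by
            have h := hvae
            rw [Filter.EventuallyEq, ae_iff] at h
            simpa using h
          rw [hnull, add_zero]
  -- pick ε with positive measure superlevel set
  have hUnion : {x | 0 < v x} = ⋃ n : ℕ, {x | 1/(n+1) ≤ v x} := by
    ext x
    simp only [Set.mem_setOf_eq, Set.mem_iUnion]
    constructor
    · intro hx
      obtain ⟨n, hn⟩ := exists_nat_one_div_lt hx
      exact ⟨n, hn.le⟩
    · rintro ⟨n, hn⟩
      exact lt_of_lt_of_le (by positivity) hn
  have : ∃ n : ℕ, 0 < volume {x | 1/(n+1) ≤ v x} := by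
    by_contra h
    push_neg at h
    have : ∀ n : ℕ, volume {x | 1/(n+1:ℝ) ≤ v x} = 0 :=
      fun n => le_antisymm (h n) (by simp)
    have h0 : volume {x | 0 < v x} = 0 := by
      rw [hUnion]
      exact measure_iUnion_null_iff.mpr this
    rw [h0] at hvpos; exact lt_irrefl _ hvpos
  obtain ⟨n, hSpos⟩ := this
  set ε : ℝ := 1/(n+1) with hεdef
  have hε : 0 < ε := by positivity
  set S := {x | ε ≤ v x} with hSdef
  have hSmeas : MeasurableSet S := hvmeas.measurable measurableSet_Ici
  -- finiteness of volume S
  have hv2 : Integrable (fun x => (v x) ^ 2) := by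
    apply hL2.congr
    filter_upwards [hvae] with x hx
    rw [← hx, sq_abs]
  have hSfin : volume S < ⊤ := by
    refine lt_of_le_of_lt (measure_mono ?_) (hv2.measure_ge_lt_top (by positivity : 0 < ε^2))
    intro x hx
    have hx' : ε ≤ v x := hx
    show ε ^ 2 ≤ (v x) ^ 2
    exact pow_le_pow_left₀ hε.le hx' 2
  set m := (volume S).toReal with hmdef
  have hm : 0 < m := ENNReal.toReal_pos (ne_of_gt hSpos) (ne_of_lt hSfin)
  -- choose T with q T large
  obtain ⟨T, hT, hqT⟩ := q_unbounded hcont hodd hmono hlim hθ hAR (A / (ε^2 * m))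
  set b := max (T/ε) (a+1) with hbdef
  have hba : a < b := lt_of_lt_of_le (by linarith) (le_max_right _ _)
  have hbpos : 0 < b := lt_of_lt_of_le (by positivity) (le_max_left _ _)
  have hbT : T ≤ b * ε := by
    rw [← div_le_iff₀ hε]
    exact le_max_left _ _
  refine ⟨b, hba, hbpos, ?_⟩
  have hqTpos : 0 < f T / T := q_pos hmono hlim hT
  -- lower bound by indicator
  have hlow : ∀ᵐ x, (S.indicator (fun _ => (f T / T) * ε^2)) x
      ≤ (f (b * |u x|) / (b * |u x|)) * (u x) ^ 2 := by
    filter_upwards [hvae] with x hx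
    by_cases hxS : x ∈ S
    · rw [Set.indicator_of_mem hxS]
      have hεu : ε ≤ |u x| := by rw [hx]; exact hxS
      have habs : 0 < |u x| := lt_of_lt_of_le hε hεu
      have h1 : T ≤ b * |u x| := le_trans hbT (by nlinarith)
      have hq : f T / T ≤ f (b * |u x|) / (b * |u x|) := by
        rcases eq_or_lt_of_le h1 with heq | hlt
        · rw [← heq]
        · exact (hmono (Set.mem_Ioi.mpr hT) (Set.mem_Ioi.mpr (by positivity)) hlt).le
      have hu2 : ε ^ 2 ≤ (u x) ^ 2 := by rw [← sq_abs (u x)]; nlinarith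
      exact mul_le_mul hq hu2 (by positivity) (le_of_lt (lt_of_lt_of_le hqTpos hq))
    · rw [Set.indicator_of_notMem hxS]
      exact qmul_nonneg hmono hlim hbpos (u x)
  have hint_ind : Integrable (S.indicator (fun _ => (f T / T) * ε^2)) := by
    apply (integrableOn_const hSfin.ne).integrable_indicator hSmeas
  have hint_b := phi_integrable hodd (hintf b hbpos) hbpos
  have hmono_int := integral_mono_ae hint_ind hint_b hlow
  have hind_val : (∫ x, (S.indicator (fun _ => (f T / T) * ε^2)) x)
      = ((f T / T) * ε^2) * m := by
    rw [integral_indicator_const _ hSmeas]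
    simp [hmdef, smul_eq_mul, mul_comm, Measure.real]
  rw [hind_val] at hmono_int
  refine lt_of_lt_of_le ?_ hmono_int
  have : A / (ε^2 * m) * (ε^2 * m) = A := by field_simp
  calc A = A / (ε^2 * m) * (ε^2 * m) := this.symm
    _ < (f T / T) * (ε^2 * m) := by
        apply mul_lt_mul_of_pos_right hqT (by positivity)
    _ = (f T / T) * ε^2 * m := by ring

end integralaux3

section deriv
variable {d : ℕ} {f : ℝ → ℝ} {u : E d → ℝ}

lemma hasDerivAt_Fprim (hcont : Continuous f) (t : ℝ) : HasDerivAt (Fprim f) (f t) t :=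
  intervalIntegral.integral_hasDerivAt_right (hcont.intervalIntegrable _ _)
    (hcont.stronglyMeasurable.stronglyMeasurableAtFilter) hcont.continuousAt

lemma Phi_hasDerivAt (hcont : Continuous f) (hodd : ∀ s, f (-s) = - f s)
    (hmono : StrictMonoOn (fun s => f s / s) (Set.Ioi (0:ℝ)))
    (hlim : Filter.Tendsto (fun s => f s / s) (nhdsWithin 0 {(0:ℝ)}ᶜ) (nhds 0))
    (hintF : ∀ s > (0:ℝ), Integrable (fun x => Fprim f (s * u x)))
    (hintf : ∀ s > (0:ℝ), Integrable (fun x => f (s * u x) * (s * u x)))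
    {s₀ : ℝ} (hs₀ : 0 < s₀) :
    HasDerivAt (fun s => ∫ x, Fprim f (s * u x))
      ((∫ x, f (s₀ * u x) * (s₀ * u x)) / s₀) s₀ := by
  have hball : ∀ s ∈ Metric.ball s₀ (s₀/2), s₀/2 < s ∧ s < 3/2 * s₀ := by
    intro s hs
    rw [Metric.mem_ball, Real.dist_eq, abs_lt] at hs
    constructor <;> linarith [hs.1, hs.2]
  have hmeq : (fun x => f (s₀ * u x) * (s₀ * u x) / s₀) = fun x => f (s₀ * u x) * u x := by
    funext x
    field_simp
  have key := hasDerivAt_integral_of_dominated_loc_of_deriv_le (μ := volume)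
    (F := fun s x => Fprim f (s * u x)) (F' := fun s x => f (s * u x) * u x)
    (x₀ := s₀) (s := Metric.ball s₀ (s₀/2))
    (bound := fun x => (f ((3/2*s₀) * u x) * ((3/2*s₀) * u x)) * (2/s₀))
    (Metric.ball_mem_nhds _ (by linarith))
    (by
      filter_upwards [Ioo_mem_nhds (show s₀/2 < s₀ by linarith) (show s₀ < 3/2*s₀ by linarith)]
        with s hs
      exact (hintF s (lt_trans (by linarith) hs.1)).aestronglyMeasurable)
    (hintF s₀ hs₀)
    (by
      show AEStronglyMeasurable (fun x => f (s₀ * u x) * u x) volume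
      rw [← hmeq]
      exact ((hintf s₀ hs₀).div_const s₀).aestronglyMeasurable)
    (by
      refine Filter.Eventually.of_forall fun x => fun s hs => ?_
      obtain ⟨hs1, hs2⟩ := hball s hs
      have hspos : 0 < s := lt_trans (by linarith) hs1
      have hnn : 0 ≤ f (s * u x) * (s * u x) := fmul_nonneg hodd hmono hlim _
      show ‖f (s * u x) * u x‖ ≤ (f ((3/2*s₀) * u x) * ((3/2*s₀) * u x)) * (2/s₀)
      have he : f (s * u x) * u x = f (s * u x) * (s * u x) / s := by
        field_simp
      rw [Real.norm_eq_abs, he, abs_of_nonneg (by positivity)]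
      have hb1 : f (s * u x) * (s * u x) / s ≤ f (s * u x) * (s * u x) * (2/s₀) := by
        rw [div_eq_mul_inv]
        apply mul_le_mul_of_nonneg_left _ hnn
        rw [inv_le_iff_one_le_mul₀ hspos]  -- maybe wrong name
        · rw [div_mul_eq_mul_div, le_div_iff₀ (by linarith : (0:ℝ) < s₀)]
          linarith
      refine le_trans hb1 ?_
      apply mul_le_mul_of_nonneg_right
        (fmul_mono hodd hmono hlim hspos hs2.le (u x)) (by positivity))
    ((hintf (3/2*s₀) (by linarith)).mul_const _)
    (by
      refine Filter.Eventually.of_forall fun x => fun s hs => ?_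
      have h1 := (hasDerivAt_Fprim hcont (s * u x)).comp s (hasDerivAt_mul_const (u x))
      exact h1)
  have h2 : HasDerivAt (fun s => ∫ x, Fprim f (s * u x))
      (∫ x, f (s₀ * u x) * u x) s₀ := key.2
  have h3 : (∫ x, f (s₀ * u x) * u x) = (∫ x, f (s₀ * u x) * (s₀ * u x)) / s₀ := by
    rw [← integral_div]
    exact congrArg _ hmeq.symm
  rw [h3] at h2
  exact h2

lemma Phi_le_halfG (hcont : Continuous f) (hodd : ∀ s, f (-s) = - f s)
    (hmono : StrictMonoOn (fun s => f s / s) (Set.Ioi (0:ℝ)))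
    (hlim : Filter.Tendsto (fun s => f s / s) (nhdsWithin 0 {(0:ℝ)}ᶜ) (nhds 0))
    (hintFs : Integrable (fun x => Fprim f (s * u x)))
    (hintfs : Integrable (fun x => f (s * u x) * (s * u x))) :
    (∫ x, Fprim f (s * u x)) ≤ (∫ x, f (s * u x) * (s * u x)) / 2 := by
  rw [← integral_div]
  apply integral_mono hintFs (hintfs.div_const 2)
  intro x
  have := Fprim_le_half hcont hodd hmono hlim (s * u x)
  simpa [div_eq_mul_inv] using this

end deriv

/-- under (H1)–(H6), for every `u ∈ H¹(ℝᵈ) \ {0}` there is a unique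
`s_u ∈ (0,∞)` with `I(s_u u) = 0`; moreover `S(s_u u) = max_{s>0} S(su) > 0`;
if `I(u) < 0` then `s_u < 1`, and if `I(u) > 0` then `s_u > 1` and `S(u) > 0`.
Here `S(su) = s²/2·‖u‖²_{H¹} − ∫ F(su)` and `I(su) = s²‖u‖²_{H¹} − ∫ f(su)·su`. -/
theorem stmt_3 {d : ℕ} (f : ℝ → ℝ) (hf : Hyps d f)
    (u : E d → ℝ) (hu : ¬ u =ᵐ[volume] (0 : E d → ℝ))
    (hgrad : Integrable (gradSq u)) (hL2 : Integrable (fun x => (u x) ^ 2))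
    (hintF : ∀ s > (0:ℝ), Integrable (fun x => Fprim f (s * u x)))
    (hintf : ∀ s > (0:ℝ), Integrable (fun x => f (s * u x) * (s * u x))) :
    ∃ su ∈ Set.Ioi (0:ℝ),
      (su ^ 2 * H1normSq u - (∫ x, f (su * u x) * (su * u x)) = 0) ∧
      (∀ s ∈ Set.Ioi (0:ℝ),
        s ^ 2 * H1normSq u - (∫ x, f (s * u x) * (s * u x)) = 0 → s = su) ∧
      (∀ s ∈ Set.Ioi (0:ℝ),
        s ^ 2 / 2 * H1normSq u - (∫ x, Fprim f (s * u x)) ≤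
          su ^ 2 / 2 * H1normSq u - ∫ x, Fprim f (su * u x)) ∧
      (0 < su ^ 2 / 2 * H1normSq u - ∫ x, Fprim f (su * u x)) ∧
      (Ifun f u < 0 → su < 1) ∧
      (0 < Ifun f u → 1 < su ∧ 0 < Sfun f u) := by
  obtain ⟨⟨hcont, hodd⟩, -, hlim, -, hmono, θ, hθ, hAR⟩ := hf
  have hA : 0 < H1normSq u := H1_pos hu hgrad hL2
  set A := H1normSq u with hAdef
  set φ : ℝ → ℝ := fun s => ∫ x, (f (s * |u x|) / (s * |u x|)) * (u x) ^ 2 with hφdef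
  set G : ℝ → ℝ := fun s => ∫ x, f (s * u x) * (s * u x) with hGdef
  have hφG : ∀ s, 0 < s → φ s = G s / s ^ 2 := fun s hs => phi_eq hodd hs
  have hGφ : ∀ s, 0 < s → G s = φ s * s ^ 2 := by
    intro s hs
    rw [hφG s hs]
    field_simp
  have hφint : ∀ s, 0 < s →
      Integrable (fun x => (f (s * |u x|) / (s * |u x|)) * (u x) ^ 2) :=
    fun s hs => phi_integrable hodd (hintf s hs) hs
  have hφmono : StrictMonoOn φ (Set.Ioi 0) := by
    intro s₁ h1 s₂ h2 h12
    exact phi_strictMono hodd hmono hlim hu h1 h12 (hφint _ h1) (hφint _ h2)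
  have hφcont : ∀ s, 0 < s → ContinuousAt φ s := by
    intro s hs
    have hG : ContinuousAt G s := G_continuousAt hcont hodd hmono hlim hintf hs
    have hdiv : ContinuousAt (fun s => G s / s ^ 2) s :=
      hG.div ((continuous_pow 2).continuousAt) (by positivity)
    apply hdiv.congr
    filter_upwards [Ioi_mem_nhds hs] with t ht
    exact (hφG t ht).symm
  -- small and large values
  obtain ⟨a, ha, haA⟩ := phi_small hodd hmono hlim hintf hA
  obtain ⟨b, hab, hbpos, hbA⟩ :=
    phi_large hcont hodd hmono hlim hθ hAR hu hL2 hintf A a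
  have haA' : φ a < A := haA
  have hbA' : A < φ b := hbA
  -- IVT
  have hcontOn : ContinuousOn φ (Set.Icc a b) := fun s hs =>
    (hφcont s (lt_of_lt_of_le ha hs.1)).continuousWithinAt
  obtain ⟨su, hsu_mem, hsuA⟩ := intermediate_value_Ioo hab.le hcontOn ⟨haA', hbA'⟩
  have hsupos : 0 < su := lt_trans ha hsu_mem.1
  -- Nehari condition
  have hGsu : su ^ 2 * A - G su = 0 := by
    rw [hGφ su hsupos, hsuA]
    ring
  -- ψ and its derivative
  set Φ : ℝ → ℝ := fun s => ∫ x, Fprim f (s * u x) with hΦdef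
  set ψ : ℝ → ℝ := fun s => s ^ 2 / 2 * A - Φ s with hψdef
  have hψd : ∀ s, 0 < s → HasDerivAt ψ (s * (A - φ s)) s := by
    intro s hs
    have h1 := Phi_hasDerivAt hcont hodd hmono hlim hintF hintf hs
    have h2 : HasDerivAt (fun s : ℝ => s ^ 2 / 2 * A) (s * A) s := by
      have h3 := ((hasDerivAt_pow 2 s).div_const 2).mul_const A
      have he : ((2:ℕ):ℝ) * s ^ (2 - 1) / 2 * A = s * A := by norm_num
      rwa [he] at h3
    have h4 := h2.sub h1
    have h5 : s * A - G s / s = s * (A - φ s) := by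
      have hGs : G s / s = φ s * s := by
        rw [hGφ s hs, pow_two, ← mul_assoc, mul_div_assoc, div_self (ne_of_gt hs), mul_one]
      rw [hGs]
      ring
    rw [← h5]
    exact h4
  -- monotone up to su, antitone after
  have hmonoψ : StrictMonoOn ψ (Set.Ioc 0 su) := by
    apply strictMonoOn_of_deriv_pos (convex_Ioc 0 su)
    · exact fun s hs => ((hψd s hs.1).continuousAt).continuousWithinAt
    · intro s hs
      rw [interior_Ioc] at hs
      rw [(hψd s hs.1).deriv]
      have hφs : φ s < A := by
        rw [← hsuA]
        exact hφmono (Set.mem_Ioi.mpr hs.1) (Set.mem_Ioi.mpr hsupos) hs.2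
      have := hs.1
      nlinarith
  have hantiψ : StrictAntiOn ψ (Set.Ici su) := by
    apply strictAntiOn_of_deriv_neg (convex_Ici su)
    · exact fun s hs =>
        ((hψd s (lt_of_lt_of_le hsupos hs)).continuousAt).continuousWithinAt
    · intro s hs
      rw [interior_Ici] at hs
      have hspos : 0 < s := lt_trans hsupos hs
      rw [(hψd s hspos).deriv]
      have hφs : A < φ s := by
        rw [← hsuA]
        exact hφmono (Set.mem_Ioi.mpr hsupos) (Set.mem_Ioi.mpr hspos) hs
      nlinarith
  have hmax : ∀ s, 0 < s → ψ s ≤ ψ su := by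
    intro s hs
    rcases le_or_gt s su with h | h
    · rcases eq_or_lt_of_le h with rfl | h'
      · exact le_refl _
      · exact (hmonoψ ⟨hs, h⟩ ⟨hsupos, le_refl _⟩ h').le
    · exact (hantiψ (Set.mem_Ici.mpr (le_refl _)) (Set.mem_Ici.mpr h.le) h).le
  -- positivity of ψ below su
  have hψpos : ∀ s, 0 < s → φ s < A → 0 < ψ s := by
    intro s hs hφs
    have hΦle : Φ s ≤ G s / 2 :=
      Phi_le_halfG hcont hodd hmono hlim (hintF s hs) (hintf s hs)
    have hGs : G s = φ s * s ^ 2 := hGφ s hs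
    have : ψ s = s ^ 2 / 2 * A - Φ s := rfl
    rw [this]
    have hs2 : 0 < s ^ 2 := by positivity
    nlinarith
  have hψsupos : 0 < ψ su := lt_of_lt_of_le (hψpos a ha haA') (hmax a ha)
  -- relate Ifun and Sfun at s = 1
  have hG1 : G 1 = ∫ x, f (u x) * u x := by
    show (∫ x, f (1 * u x) * (1 * u x)) = _
    simp only [one_mul]
  have hΦ1 : Φ 1 = ∫ x, Fprim f (u x) := by
    show (∫ x, Fprim f (1 * u x)) = _
    simp only [one_mul]
  have hIfun : Ifun f u = A - G 1 := by
    rw [Ifun, hG1, hAdef]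
  have hφ1 : φ 1 = G 1 := by
    rw [hφG 1 one_pos]
    norm_num
  refine ⟨su, Set.mem_Ioi.mpr hsupos, hGsu, ?_, ?_, hψsupos, ?_, ?_⟩
  · -- uniqueness
    intro s hs hseq
    have hs' : 0 < s := hs
    have hφs : φ s = A := by
      have hGs : G s = s ^ 2 * A := by
        have h0 : s ^ 2 * A - G s = 0 := hseq
        linarith
      rw [hφG s hs', hGs]
      field_simp
    exact hφmono.injOn (Set.mem_Ioi.mpr hs') (Set.mem_Ioi.mpr hsupos) (by rw [hφs, hsuA])
  · -- maximality
    intro s hs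
    exact hmax s hs
  · -- Ifun < 0 → su < 1
    intro hI
    rw [hIfun] at hI
    have h1A : A < φ 1 := by rw [hφ1]; linarith
    by_contra h
    push_neg at h
    have : φ 1 ≤ φ su := by
      rcases eq_or_lt_of_le h with rfl | h'
      · exact le_refl _
      · exact (hφmono (Set.mem_Ioi.mpr one_pos) (Set.mem_Ioi.mpr hsupos) h').le
    rw [hsuA] at this
    linarith
  · -- Ifun > 0 → 1 < su and Sfun > 0
    intro hI
    rw [hIfun] at hI
    have h1A : φ 1 < A := by rw [hφ1]; linarith
    have h1su : 1 < su := by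
      by_contra h
      push_neg at h
      have : φ su ≤ φ 1 := by
        rcases eq_or_lt_of_le h with heq | h'
        · rw [heq]
        · exact (hφmono (Set.mem_Ioi.mpr hsupos) (Set.mem_Ioi.mpr one_pos) h').le
      rw [hsuA] at this
      linarith
    refine ⟨h1su, ?_⟩
    have hψ1 : 0 < ψ 1 := hψpos 1 one_pos h1A
    have : Sfun f u = ψ 1 := by
      rw [Sfun, hψdef]
      simp only [hΦ1, hAdef]
      norm_num
    rw [this]
    exact hψ1
end
end
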